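/- Let d ≥ 3, γ, w_m real with B := 1 - 2γ(d-1)(1+w_m)/(d-2) ≠ 0. At the fixed point CP2 with x_φ² = 1 - 2γ(1+w_m)/(1-w_m) and x_V = 0 (assuming w_m ≠ 1 and this quantity is nonnegative), the deceleration parameter q = -1 + ((d-1)/(2[1-2γ(d-1)/(d-2)])) · [1 - 2γd/(d-2) + w_m x_m² + x_φ² - x_V²], where x_m² is determined by the constraint B x_m² + (1-4γ(d-1)/(d-2)) x_φ² + x_V² = 1 - 2γd/(d-2), equals q = d - 2. In particular q > 0 for all d ≥ 3, so CP2 never describes an accelerating universe. -/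
import Mathlib

theorem stmt_13 (d : ℕ) (hd : 3 ≤ d) (γ wm : ℝ) (hw : wm ≠ 1)
    (B : ℝ) (hB : B = 1 - 2*γ*((d:ℝ)-1)*(1+wm)/((d:ℝ)-2)) (hB0 : B ≠ 0)
    (hγ : 1 - 2*γ*((d:ℝ)-1)/((d:ℝ)-2) ≠ 0)
    (xm xφ xV : ℝ)
    (hxφ : xφ^2 = 1 - 2*γ*(1+wm)/(1-wm)) (hxφ0 : 0 ≤ 1 - 2*γ*(1+wm)/(1-wm))
    (hxV : xV = 0)
    (hcon : B*xm^2 + (1 - 4*γ*((d:ℝ)-1)/((d:ℝ)-2))*xφ^2 + xV^2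
      = 1 - 2*γ*(d:ℝ)/((d:ℝ)-2))
    (q : ℝ)
    (hq : q = -1 + ((d:ℝ)-1)/(2*(1 - 2*γ*((d:ℝ)-1)/((d:ℝ)-2)))
      * (1 - 2*γ*(d:ℝ)/((d:ℝ)-2) + wm*xm^2 + xφ^2 - xV^2)) :
    q = (d:ℝ) - 2 ∧ 0 < q := by
  have hd3 : (3:ℝ) ≤ (d:ℝ) := by exact_mod_cast hd
  have hd2 : ((d:ℝ)-2) ≠ 0 := by linarith
  have hw' : (1 - wm) ≠ 0 := sub_ne_zero.mpr (Ne.symm hw)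
  set A : ℝ := 1 - 2*γ*(d:ℝ)/((d:ℝ)-2) with hA
  set G : ℝ := 1 - 2*γ*((d:ℝ)-1)/((d:ℝ)-2) with hG
  set C : ℝ := 1 - 4*γ*((d:ℝ)-1)/((d:ℝ)-2) with hC
  set P : ℝ := 1 - 2*γ*(1+wm)/(1-wm) with hP
  -- key rational identity
  have key : wm*(A - C*P) = B*(2*G - A - P) := by
    rw [hB, hA, hG, hC, hP]
    field_simp
    ring
  have hcon' : B*xm^2 = A - C*P := by
    rw [hxV, hxφ] at hcon; linarith [hcon]
  have h1 : wm*xm^2 = 2*G - A - P := by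
    have h2 : B*(wm*xm^2) = B*(2*G - A - P) := by
      calc B*(wm*xm^2) = wm*(B*xm^2) := by ring
        _ = wm*(A - C*P) := by rw [hcon']
        _ = B*(2*G - A - P) := key
    exact mul_left_cancel₀ hB0 h2
  have hmain : q = (d:ℝ) - 2 := by
    rw [hq, hxV, hxφ, h1]
    have : A + (2*G - A - P) + P - 0^2 = 2*G := by ring
    rw [this]
    rw [div_mul_cancel₀]
    · ring
    · intro h
      apply hγ
      have : G = 0 := by linarith [h]
      exact this
  exact ⟨hmain, by rw [hmain]; linarith⟩
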